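/- (Expected number of set components of DPBV) Fix reals L < U, t > 0 and ε > 0, and set μ = U − L + 2t. Let r_1, …, r_s be i.i.d. uniform on [L − t, U + t], and let the DPBV encoding of x ∈ [L, U] be the random vector whose i-th bit equals h_{r_i,t}(x) with probability e^ε/(e^ε + 1) and 1 − h_{r_i,t}(x) with probability 1/(e^ε + 1), independently across coordinates and independent of the r_i. Then the expected number w of set components of the DPBV encoding of x satisfies E[w] = s · ( (2t/μ) · (e^ε − 1)/(e^ε + 1) + 1/(e^ε + 1) ); in particular this expectation is the same for every x ∈ [L, U]. -/

import Mathlib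

open MeasureTheory ProbabilityTheory Real

/-- The BV hash: `h_{r,t}(x) = 1` if `x ∈ [r - t, r + t]` and `0` otherwise. -/
noncomputable def bvHash (t r x : ℝ) : ℕ := if x ∈ Set.Icc (r - t) (r + t) then 1 else 0

/-- The uniform probability measure on the interval `[a, b]`. -/
noncomputable def uniformIcc (a b : ℝ) : Measure ℝ :=
  (ENNReal.ofReal (b - a))⁻¹ • (volume.restrict (Set.Icc a b))

/-- A DPBV bit: the BV hash bit `bvHash t r x`, kept if the flip indicator is `0` and
flipped (`1 - bit`) if the flip indicator is `1`. -/
noncomputable def dpbvBit (t r x flip : ℝ) : ℕ :=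
  if flip = 1 then 1 - bvHash t r x else bvHash t r x

/-- (Expected number of set components of DPBV) For `L < U`, `t > 0`, `ε > 0`,
`μ = U - L + 2t`, `r 0, …, r (s-1)` i.i.d. uniform on `[L - t, U + t]`, and flip indicators
`f 0, …, f (s-1)` which are `1` with probability `1/(e^ε + 1)` and `0` otherwise (so each bit of
the DPBV encoding equals the BV bit with probability `e^ε/(e^ε + 1)`), all mutually
independent, the expected number of set components of the DPBV encoding of any `x ∈ [L, U]` is
`E[w] = s · ((2t/μ) · (e^ε − 1)/(e^ε + 1) + 1/(e^ε + 1))` (independent of `x`). -/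
theorem dpbv_expected_set_components
    {Ω : Type*} [MeasurableSpace Ω] (P : Measure Ω) [IsProbabilityMeasure P]
    (L U t μ ε : ℝ) (hLU : L < U) (ht : 0 < t) (hε : 0 < ε) (hμ : μ = U - L + 2 * t)
    (s : ℕ) (r : Fin s → Ω → ℝ) (f : Fin s → Ω → ℝ)
    (hr : ∀ i, Measurable (r i)) (hf : ∀ i, Measurable (f i))
    (hrlaw : ∀ i, Measure.map (r i) P = uniformIcc (L - t) (U + t))
    (hf01 : ∀ i ω, f i ω = 0 ∨ f i ω = 1)
    (hflaw : ∀ i, P {ω | f i ω = 1} = ENNReal.ofReal (1 / (exp ε + 1)))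
    (hindep : iIndepFun (Sum.elim r f) P)
    (x : ℝ) (hx : x ∈ Set.Icc L U) :
    ∫ ω, (∑ i, (dpbvBit t (r i ω) x (f i ω) : ℝ)) ∂P
      = s * ((2 * t / μ) * (exp ε - 1) / (exp ε + 1) + 1 / (exp ε + 1)) := by
  have hexp : (0:ℝ) < exp ε + 1 := by positivity
  have hμpos : (0:ℝ) < μ := by rw [hμ]; linarith
  set q : ℝ := 1 / (exp ε + 1) with hq
  set p : ℝ := 2 * t / μ with hp
  obtain ⟨hxL, hxU⟩ := hx
  -- the BV bit as a function of r
  set g : ℝ → ℝ := (Set.Icc (x - t) (x + t)).indicator (fun _ => (1:ℝ)) with hg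
  have hgmeas : Measurable g := measurable_const.indicator measurableSet_Icc
  have hgval : ∀ y, (bvHash t y x : ℝ) = g y := by
    intro y
    by_cases h : y ∈ Set.Icc (x - t) (x + t)
    · have hx' : x ∈ Set.Icc (y - t) (y + t) := by
        obtain ⟨h1, h2⟩ := h; constructor <;> linarith
      simp [bvHash, hg, hx', Set.indicator_of_mem h]
    · have hx' : x ∉ Set.Icc (y - t) (y + t) := by
        intro ⟨h1, h2⟩; exact h ⟨by linarith, by linarith⟩
      simp [bvHash, hg, hx', Set.indicator_of_notMem h]
  -- per-coordinate computation
  have key : ∀ i, Integrable (fun ω => (dpbvBit t (r i ω) x (f i ω) : ℝ)) P ∧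
      ∫ ω, (dpbvBit t (r i ω) x (f i ω) : ℝ) ∂P = p * (exp ε - 1) / (exp ε + 1) + q := by
    intro i
    set B : Ω → ℝ := fun ω => g (r i ω) with hB
    set F : Ω → ℝ := f i with hF
    have hBmeas : Measurable B := hgmeas.comp (hr i)
    have hFmeas : Measurable F := hf i
    -- pointwise identity
    have hpt : ∀ ω, (dpbvBit t (r i ω) x (f i ω) : ℝ) = B ω + (F ω - 2 * (F ω * B ω)) := by
      intro ω
      have hBv : B ω = (bvHash t (r i ω) x : ℝ) := (hgval _).symm
      rcases hf01 i ω with h0 | h1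
      · have : f i ω ≠ 1 := by rw [h0]; norm_num
        simp only [dpbvBit, if_neg this, hBv]
        rw [show F ω = 0 from h0]; ring
      · simp only [dpbvBit, if_pos h1]
        rw [show F ω = 1 from h1]
        rcases Nat.le_one_iff_eq_zero_or_eq_one.mp
            (by unfold bvHash; split <;> simp : bvHash t (r i ω) x ≤ 1) with hb | hb <;>
          simp [hb, hBv] <;> ring
    -- independence of B and F
    have hidf : IndepFun (r i) (f i) P := by
      have := hindep.indepFun (i := Sum.inl i) (j := Sum.inr i) (by simp)
      simpa using this
    have hBF : IndepFun F B P := by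
      have h := hidf.comp hgmeas measurable_id
      exact h.symm
    -- integrability
    have hBint : Integrable B P := by
      refine (integrable_const (1:ℝ)).mono' hBmeas.aestronglyMeasurable ?_
      filter_upwards with ω
      rw [hB]; simp only [hg]
      by_cases h : r i ω ∈ Set.Icc (x - t) (x + t) <;> simp [h]
    have hFint : Integrable F P := by
      refine (integrable_const (1:ℝ)).mono' hFmeas.aestronglyMeasurable ?_
      filter_upwards with ω
      rcases hf01 i ω with h | h <;> simp [hF, h]
    -- E[B]
    have hEB : ∫ ω, B ω ∂P = p := by
      have hsub : Set.Icc (x - t) (x + t) ⊆ Set.Icc (L - t) (U + t) :=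
        Set.Icc_subset_Icc (by linarith) (by linarith)
      have : ∫ ω, B ω ∂P = ∫ y, g y ∂(Measure.map (r i) P) :=
        (integral_map (hr i).aemeasurable hgmeas.aestronglyMeasurable).symm
      rw [this, hrlaw i, hg, integral_indicator_const (1:ℝ) measurableSet_Icc, smul_eq_mul, mul_one]
      rw [measureReal_def, uniformIcc, Measure.smul_apply, Measure.restrict_apply measurableSet_Icc,
        Set.inter_eq_left.mpr hsub, Real.volume_Icc]
      rw [smul_eq_mul, ENNReal.toReal_mul, ENNReal.toReal_inv, ENNReal.toReal_ofReal (by linarith),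
        ENNReal.toReal_ofReal (by linarith)]
      rw [hp]
      have : U + t - (L - t) = μ := by rw [hμ]; ring
      rw [this]
      have : x + t - (x - t) = 2 * t := by ring
      rw [this, inv_mul_eq_div]
    -- E[F]
    have hEF : ∫ ω, F ω ∂P = q := by
      have hFind : ∀ ω, F ω = ({ω | f i ω = 1}).indicator (fun _ => (1:ℝ)) ω := by
        intro ω
        rcases hf01 i ω with h | h
        · have : ω ∉ {ω | f i ω = 1} := by simp [Set.mem_setOf_eq, h]
          simp [hF, h, Set.indicator_of_notMem this]
        · have : ω ∈ {ω | f i ω = 1} := h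
          simp [hF, h, Set.indicator_of_mem this]
      have hmeasset : MeasurableSet {ω | f i ω = 1} := (hf i) (measurableSet_singleton 1)
      rw [integral_congr_ae (Filter.Eventually.of_forall hFind),
        integral_indicator_const (1:ℝ) hmeasset, measureReal_def, hflaw i, smul_eq_mul, mul_one,
        ENNReal.toReal_ofReal (by positivity)]
    -- product
    have hFBint : Integrable (fun ω => F ω * B ω) P := hBF.integrable_mul hFint hBint
    have hEFB : ∫ ω, F ω * B ω ∂P = q * p := by
      have h := hBF.integral_mul_eq_mul_integral hFmeas.aestronglyMeasurable hBmeas.aestronglyMeasurable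
      rw [hEF, hEB] at h
      exact h
    refine ⟨(hBint.add (hFint.sub (hFBint.const_mul 2))).congr
      (Filter.Eventually.of_forall fun ω => (hpt ω).symm), ?_⟩
    have h2 : Integrable (fun ω => 2 * (F ω * B ω)) P := hFBint.const_mul 2
    have h3 : Integrable (fun ω => F ω - 2 * (F ω * B ω)) P := hFint.sub h2
    rw [integral_congr_ae (Filter.Eventually.of_forall hpt),
      integral_add hBint h3, integral_sub hFint h2, integral_const_mul, hEB, hEF, hEFB, hq]
    field_simp
    ring
  rw [integral_finset_sum _ (fun i _ => (key i).1),
    Finset.sum_congr rfl (fun i _ => (key i).2), Finset.sum_const, Finset.card_univ,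
    Fintype.card_fin, nsmul_eq_mul]
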